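/- If the empirical distribution of play δ^T of T iterations of a regret minimizer is a γ(T)-approximate CCE with γ(T) = C/√T, and δ^T is ε-normal-form marginalizable, then the profile of empirical average strategies σ̄^T (the marginals of δ^T) satisfies NashGap(σ̄^T) ≤ C/√T + 2M√(2ε), where M bounds absolute utilities. -/

import Mathlib

open Finset

noncomputable def marg {N : Type} [Fintype N] [DecidableEq N]
    {P : N → Type} [∀ i, Fintype (P i)] [∀ i, DecidableEq (P i)]
    (δ : (∀ j, P j) → ℝ) (i : N) (a : P i) : ℝ :=
  ∑ ρ : ∀ j, P j, if ρ i = a then δ ρ else 0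

noncomputable def prodMarg {N : Type} [Fintype N] [DecidableEq N]
    {P : N → Type} [∀ i, Fintype (P i)] [∀ i, DecidableEq (P i)]
    (δ : (∀ j, P j) → ℝ) (ρ : ∀ j, P j) : ℝ :=
  ∏ i, marg δ i (ρ i)

noncomputable def KL {X : Type} [Fintype X] (p q : X → ℝ) : ℝ :=
  ∑ x, p x * Real.log (p x / q x)

noncomputable def expUtil {X : Type} [Fintype X] (u : X → ℝ) (δ : X → ℝ) : ℝ :=
  ∑ x, u x * δ x

noncomputable def devUtil {N : Type} [Fintype N] [DecidableEq N]
    {P : N → Type} [∀ i, Fintype (P i)] [∀ i, DecidableEq (P i)]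
    (u : N → (∀ j, P j) → ℝ) (δ : (∀ j, P j) → ℝ) (i : N) (a : P i) : ℝ :=
  ∑ ρ, δ ρ * u i (Function.update ρ i a)

noncomputable def gap {N : Type} [Fintype N] [DecidableEq N] [Nonempty N]
    {P : N → Type} [∀ i, Fintype (P i)] [∀ i, DecidableEq (P i)] [∀ i, Nonempty (P i)]
    (u : N → (∀ j, P j) → ℝ) (δ : (∀ j, P j) → ℝ) : ℝ :=
  haveI : Nonempty (Σ i, P i) := ⟨⟨Classical.arbitrary N, Classical.arbitrary _⟩⟩
  Finset.univ.sup' Finset.univ_nonempty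
    (fun q : Σ i, P i => devUtil u δ q.1 q.2 - expUtil (u q.1) δ)


lemma binPinskerAux0 {b : ℝ} (hb0 : 0 ≤ b) (hb1 : b < 1) :
    2 * b ^ 2 ≤ -Real.log (1 - b) := by
  set G : ℝ → ℝ := fun x => -Real.log (1 - x) - 2 * x ^ 2 with hG
  have hd : ∀ x ∈ Set.Ico (0:ℝ) 1, HasDerivAt G (-((1 - x)⁻¹ * (-1)) - 2 * (2 * x ^ 1 * 1)) x := by
    intro x hx
    have h1 : HasDerivAt (fun x : ℝ => 1 - x) (-1) x := by
      simpa using (hasDerivAt_id x).const_sub 1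
    have h2 : HasDerivAt (fun x : ℝ => Real.log (1 - x)) ((1 - x)⁻¹ * (-1)) x :=
      (Real.hasDerivAt_log (by nlinarith [hx.2] : (1:ℝ) - x ≠ 0)).comp x h1
    have h3 : HasDerivAt (fun x : ℝ => 2 * x ^ 2) (2 * (2 * x ^ 1 * 1)) x :=
      ((hasDerivAt_id x).pow 2).const_mul 2
    exact (h2.neg).sub h3
  have hmono : MonotoneOn G (Set.Icc 0 b) := by
    apply monotoneOn_of_deriv_nonneg (convex_Icc 0 b)
    · intro x hx
      exact ((hd x ⟨hx.1, lt_of_le_of_lt hx.2 hb1⟩).continuousAt).continuousWithinAt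
    · intro x hx
      rw [interior_Icc] at hx
      exact ((hd x ⟨le_of_lt hx.1, lt_of_lt_of_le hx.2 (le_of_lt hb1)⟩).differentiableAt).differentiableWithinAt
    · intro x hx
      rw [interior_Icc] at hx
      have hx1 : x < 1 := lt_of_lt_of_le hx.2 (le_of_lt hb1)
      rw [(hd x ⟨le_of_lt hx.1, hx1⟩).deriv]
      have h1x : (0:ℝ) < 1 - x := by linarith
      have : -((1 - x)⁻¹ * (-1)) - 2 * (2 * x ^ 1 * 1) = (1 - 2*x)^2 / (1 - x) := by
        field_simp
        ring
      rw [this]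
      positivity
  have h0 : G 0 = 0 := by simp [hG]
  have := hmono (Set.left_mem_Icc.mpr hb0) (Set.right_mem_Icc.mpr hb0) hb0
  rw [h0] at this
  simp only [hG] at this
  linarith


lemma binPinskerAux1 {b : ℝ} (hb0 : 0 < b) (hb1 : b ≤ 1) :
    2 * (1 - b) ^ 2 ≤ -Real.log b := by
  set G : ℝ → ℝ := fun x => -Real.log x - 2 * (1 - x) ^ 2 with hG
  have hd : ∀ x ∈ Set.Ioc (0:ℝ) 1, HasDerivAt G (-x⁻¹ - 2 * (2 * (1 - x) ^ 1 * (-1))) x := by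
    intro x hx
    have h1 : HasDerivAt (fun x : ℝ => 1 - x) (-1) x := by
      simpa using (hasDerivAt_id x).const_sub 1
    have h3 : HasDerivAt (fun x : ℝ => 2 * (1 - x) ^ 2) (2 * (2 * (1 - x) ^ 1 * (-1))) x :=
      (h1.pow 2).const_mul 2
    exact ((Real.hasDerivAt_log hx.1.ne').neg).sub h3
  have hmono : AntitoneOn G (Set.Icc b 1) := by
    apply antitoneOn_of_deriv_nonpos (convex_Icc b 1)
    · intro x hx
      exact ((hd x ⟨lt_of_lt_of_le hb0 hx.1, hx.2⟩).continuousAt).continuousWithinAt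
    · intro x hx
      rw [interior_Icc] at hx
      exact ((hd x ⟨lt_of_lt_of_le hb0 (le_of_lt hx.1), le_of_lt hx.2⟩).differentiableAt).differentiableWithinAt
    · intro x hx
      rw [interior_Icc] at hx
      have hx0 : 0 < x := lt_of_lt_of_le hb0 (le_of_lt hx.1)
      rw [(hd x ⟨hx0, le_of_lt hx.2⟩).deriv]
      have : -x⁻¹ - 2 * (2 * (1 - x) ^ 1 * (-1)) = -((1 - 2*x)^2 / x) := by
        field_simp
        ring
      rw [this]
      have : (0:ℝ) ≤ (1 - 2*x)^2 / x := by positivity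
      linarith
  have h1 : G 1 = 0 := by simp [hG]
  have := hmono (Set.left_mem_Icc.mpr hb1) (Set.right_mem_Icc.mpr hb1) hb1
  rw [h1] at this
  simp only [hG] at this
  linarith



lemma binPinsker {a b : ℝ} (ha0 : 0 ≤ a) (ha1 : a ≤ 1) (hb0 : 0 < b) (hb1 : b < 1) :
    2 * (a - b) ^ 2 ≤ a * Real.log (a / b) + (1 - a) * Real.log ((1 - a) / (1 - b)) := by
  rcases eq_or_lt_of_le ha0 with h0 | ha0'
  · -- a = 0
    have : a = 0 := h0.symm
    subst this
    have := binPinskerAux0 (le_of_lt hb0) hb1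
    have hlog : Real.log ((1:ℝ) / (1 - b)) = -Real.log (1 - b) := by
      rw [Real.log_div one_ne_zero (by linarith : (1:ℝ) - b ≠ 0), Real.log_one]
      ring
    simp only [zero_mul, sub_zero, one_mul, hlog]
    linarith
  rcases eq_or_lt_of_le ha1 with h1 | ha1'
  · -- a = 1
    subst h1
    have := binPinskerAux1 hb0 (le_of_lt hb1)
    have hlog : Real.log ((1:ℝ) / b) = -Real.log b := by
      rw [Real.log_div one_ne_zero hb0.ne', Real.log_one]; ring
    simp only [sub_self, zero_mul, add_zero, one_mul, hlog]
    linarith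
  -- 0 < a < 1
  have ha1s : (0:ℝ) < 1 - a := by linarith
  set F : ℝ → ℝ := fun x =>
    a * Real.log a - a * Real.log x + (1 - a) * Real.log (1 - a)
      - (1 - a) * Real.log (1 - x) - 2 * (a - x) ^ 2 with hF
  have hd : ∀ x ∈ Set.Ioo (0:ℝ) 1, HasDerivAt F ((x - a) * (1 - 2*x)^2 / (x * (1 - x))) x := by
    intro x hx
    have hx1 : (0:ℝ) < 1 - x := by linarith [hx.2]
    have l1 : HasDerivAt (fun x : ℝ => a * Real.log x) (a * x⁻¹) x :=
      (Real.hasDerivAt_log hx.1.ne').const_mul a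
    have l2 : HasDerivAt (fun x : ℝ => 1 - x) (-1) x := by
      simpa using (hasDerivAt_id x).const_sub 1
    have l3 : HasDerivAt (fun x : ℝ => Real.log (1 - x)) ((1 - x)⁻¹ * (-1)) x :=
      (Real.hasDerivAt_log hx1.ne').comp x l2
    have l4 : HasDerivAt (fun x : ℝ => (1 - a) * Real.log (1 - x)) ((1 - a) * ((1 - x)⁻¹ * (-1))) x :=
      l3.const_mul _
    have l5 : HasDerivAt (fun x : ℝ => 2 * (a - x) ^ 2) (2 * (2 * (a - x) ^ 1 * (-1))) x := by
      have : HasDerivAt (fun x : ℝ => a - x) (-1) x := by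
        simpa using (hasDerivAt_id x).const_sub a
      exact (this.pow 2).const_mul 2
    have := ((((hasDerivAt_const x (a * Real.log a)).sub l1).add
        (hasDerivAt_const x ((1 - a) * Real.log (1 - a)))).sub l4).sub l5
    refine this.congr_deriv ?_
    field_simp [hx.1.ne', hx1.ne']
    ring
  have hFa : F a = 0 := by simp [hF]
  have key : 0 ≤ F b := by
    rcases lt_trichotomy b a with hba | hba | hba
    · -- b < a : F antitone on [b, a]
      have hanti : AntitoneOn F (Set.Icc b a) := by
        apply antitoneOn_of_deriv_nonpos (convex_Icc b a)
        · intro x hx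
          exact ((hd x ⟨lt_of_lt_of_le hb0 hx.1, lt_of_le_of_lt hx.2 ha1'⟩).continuousAt).continuousWithinAt
        · intro x hx
          rw [interior_Icc] at hx
          exact ((hd x ⟨lt_trans hb0 hx.1, lt_trans hx.2 ha1'⟩).differentiableAt).differentiableWithinAt
        · intro x hx
          rw [interior_Icc] at hx
          have hx0 : 0 < x := lt_trans hb0 hx.1
          have hx1 : x < 1 := lt_trans hx.2 ha1'
          rw [(hd x ⟨hx0, hx1⟩).deriv]
          apply div_nonpos_of_nonpos_of_nonneg
          · nlinarith [sq_nonneg (1 - 2*x), hx.2]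
          · nlinarith
      have := hanti (Set.left_mem_Icc.mpr (le_of_lt hba)) (Set.right_mem_Icc.mpr (le_of_lt hba)) (le_of_lt hba)
      rw [hFa] at this; linarith
    · subst hba; rw [hFa]
    · -- a < b : F monotone on [a, b]
      have hmono : MonotoneOn F (Set.Icc a b) := by
        apply monotoneOn_of_deriv_nonneg (convex_Icc a b)
        · intro x hx
          exact ((hd x ⟨lt_of_lt_of_le ha0' hx.1, lt_of_le_of_lt hx.2 hb1⟩).continuousAt).continuousWithinAt
        · intro x hx
          rw [interior_Icc] at hx
          exact ((hd x ⟨lt_trans ha0' hx.1, lt_trans hx.2 hb1⟩).differentiableAt).differentiableWithinAt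
        · intro x hx
          rw [interior_Icc] at hx
          have hx0 : 0 < x := lt_trans ha0' hx.1
          have hx1 : x < 1 := lt_trans hx.2 hb1
          rw [(hd x ⟨hx0, hx1⟩).deriv]
          apply div_nonneg
          · nlinarith [sq_nonneg (1 - 2*x), hx.1]
          · nlinarith
      have := hmono (Set.left_mem_Icc.mpr (le_of_lt hba)) (Set.right_mem_Icc.mpr (le_of_lt hba)) (le_of_lt hba)
      rw [hFa] at this; linarith
  have e1 : a * Real.log (a / b) = a * Real.log a - a * Real.log b := by
    rw [Real.log_div ha0'.ne' hb0.ne']; ring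
  have e2 : (1 - a) * Real.log ((1 - a) / (1 - b)) = (1 - a) * Real.log (1 - a) - (1 - a) * Real.log (1 - b) := by
    rw [Real.log_div ha1s.ne' (by linarith : (1:ℝ) - b ≠ 0)]; ring
  simp only [hF] at key
  linarith [key, e1.ge, e2.ge]

open Finset

lemma logSum {X : Type} [Fintype X] (S : Finset X) (p q : X → ℝ)
    (hp : ∀ x, 0 ≤ p x) (hq : ∀ x, 0 ≤ q x) (hac : ∀ x, q x = 0 → p x = 0)
    (hb : 0 < ∑ x ∈ S, q x) :
    (∑ x ∈ S, p x) * Real.log ((∑ x ∈ S, p x) / (∑ x ∈ S, q x)) ≤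
      ∑ x ∈ S, p x * Real.log (p x / q x) := by
  set b := ∑ x ∈ S, q x with hbdef
  set A := ∑ x ∈ S, p x with hAdef
  have hbne : b ≠ 0 := hb.ne'
  have jensen := Real.convexOn_mul_log.map_sum_le (t := S) (w := fun x => q x / b)
    (p := fun x => p x / q x)
    (fun x _ => div_nonneg (hq x) (le_of_lt hb))
    (by rw [← Finset.sum_div]; field_simp; exact hbdef.symm)
    (fun x _ => div_nonneg (hp x) (hq x))
  have harg : ∑ x ∈ S, (q x / b) • (p x / q x) = A / b := by
    rw [hAdef, Finset.sum_div]
    apply Finset.sum_congr rfl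
    intro x _
    rcases eq_or_lt_of_le (hq x) with h | h
    · rw [hac x h.symm, ← h]; simp
    · rw [smul_eq_mul]; field_simp
  rw [harg] at jensen
  have hrhs : ∑ x ∈ S, (q x / b) • ((p x / q x) * Real.log (p x / q x))
      = (∑ x ∈ S, p x * Real.log (p x / q x)) / b := by
    rw [Finset.sum_div]
    apply Finset.sum_congr rfl
    intro x _
    rcases eq_or_lt_of_le (hq x) with h | h
    · rw [hac x h.symm, ← h]; simp
    · rw [smul_eq_mul]; field_simp
  rw [hrhs] at jensen
  have := mul_le_mul_of_nonneg_left jensen (le_of_lt hb)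
  calc A * Real.log (A / b) = b * (A / b * Real.log (A / b)) := by field_simp
    _ ≤ b * ((∑ x ∈ S, p x * Real.log (p x / q x)) / b) := this
    _ = ∑ x ∈ S, p x * Real.log (p x / q x) := by field_simp

lemma pinsker {X : Type} [Fintype X] (p q : X → ℝ)
    (hp : ∀ x, 0 ≤ p x) (hq : ∀ x, 0 ≤ q x)
    (hps : ∑ x, p x = 1) (hqs : ∑ x, q x = 1) (hac : ∀ x, q x = 0 → p x = 0) :
    ∑ x, |p x - q x| ≤ Real.sqrt (2 * KL p q) := by
  classical
  set S := Finset.univ.filter (fun x => q x < p x) with hS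
  by_cases hSe : S = ∅
  · -- p ≤ q pointwise, equal sums ⇒ p = q
    have hle : ∀ x, p x ≤ q x := by
      intro x
      by_contra h
      have : x ∈ S := by simp [hS, not_le.mp h]
      simp [hSe] at this
    have hzero : ∀ x ∈ Finset.univ, q x - p x = 0 := by
      rw [← Finset.sum_eq_zero_iff_of_nonneg (fun x _ => sub_nonneg.mpr (hle x))]
      rw [Finset.sum_sub_distrib, hps, hqs]; ring
    have : ∑ x, |p x - q x| = 0 := by
      apply Finset.sum_eq_zero
      intro x _
      have := hzero x (Finset.mem_univ x)
      have : p x = q x := by linarith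
      simp [this]
    rw [this]
    exact Real.sqrt_nonneg _
  · have hSne : S.Nonempty := Finset.nonempty_of_ne_empty hSe
    set a := ∑ x ∈ S, p x with ha
    set b := ∑ x ∈ S, q x with hb
    have hmemS : ∀ x ∈ S, q x < p x := by intro x hx; simpa [hS] using hx
    have hmemSc : ∀ x ∈ Sᶜ, p x ≤ q x := by
      intro x hx
      have : ¬ q x < p x := by
        simp only [hS, Finset.mem_compl, Finset.mem_filter, Finset.mem_univ, true_and] at hx
        exact hx
      linarith [not_lt.mp this]
    have hsplit_p : a + ∑ x ∈ Sᶜ, p x = 1 := by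
      rw [ha, Finset.sum_add_sum_compl]; exact hps
    have hsplit_q : b + ∑ x ∈ Sᶜ, q x = 1 := by
      rw [hb, Finset.sum_add_sum_compl]; exact hqs
    have ha0 : 0 ≤ a := Finset.sum_nonneg (fun x _ => hp x)
    have ha1 : a ≤ 1 := by
      have : 0 ≤ ∑ x ∈ Sᶜ, p x := Finset.sum_nonneg (fun x _ => hp x)
      linarith
    have hb0 : 0 < b := by
      obtain ⟨x, hx⟩ := hSne
      have hqne : q x ≠ 0 := by
        intro h0
        have := hac x h0
        have := hmemS x hx
        linarith
      have hqx : 0 < q x := lt_of_le_of_ne (hq x) (Ne.symm hqne)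
      calc 0 < q x := hqx
        _ ≤ b := Finset.single_le_sum (fun y _ => hq y) hx
    have hblt : b < a := by
      rw [ha, hb]
      exact Finset.sum_lt_sum_of_nonempty hSne hmemS
    have hb1 : b < 1 := by
      by_contra h
      push_neg at h
      -- b ≥ 1 means ∑ Sᶜ q ≤ 0 hence = 0, so q = 0 on Sᶜ, p = 0 on Sᶜ, a = 1
      have hq0 : ∀ x ∈ Sᶜ, q x = 0 := by
        rw [← Finset.sum_eq_zero_iff_of_nonneg (fun x _ => hq x)]
        have h1 : ∑ x ∈ Sᶜ, q x ≥ 0 := Finset.sum_nonneg (fun x _ => hq x)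
        linarith
      have hp0 : ∑ x ∈ Sᶜ, p x = 0 :=
        Finset.sum_eq_zero (fun x hx => hac x (hq0 x hx))
      have : a = 1 := by linarith
      linarith
    -- KL lower bound
    have hklS := logSum S p q hp hq hac hb0
    have hbc : 0 < ∑ x ∈ Sᶜ, q x := by linarith
    have hklSc := logSum Sᶜ p q hp hq hac hbc
    have hsc_p : ∑ x ∈ Sᶜ, p x = 1 - a := by linarith
    have hsc_q : ∑ x ∈ Sᶜ, q x = 1 - b := by linarith
    rw [hsc_p, hsc_q] at hklSc
    have hKL : a * Real.log (a / b) + (1 - a) * Real.log ((1 - a) / (1 - b)) ≤ KL p q := by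
      have : KL p q = (∑ x ∈ S, p x * Real.log (p x / q x))
          + ∑ x ∈ Sᶜ, p x * Real.log (p x / q x) := by
        rw [KL, Finset.sum_add_sum_compl]
      rw [this]
      exact add_le_add hklS hklSc
    have hbin := binPinsker ha0 ha1 hb0 hb1
    -- L1 = 2(a-b)
    have hL1 : ∑ x, |p x - q x| = 2 * (a - b) := by
      have : ∑ x, |p x - q x| = (∑ x ∈ S, |p x - q x|) + ∑ x ∈ Sᶜ, |p x - q x| := by
        rw [Finset.sum_add_sum_compl]
      rw [this]
      have e1 : ∑ x ∈ S, |p x - q x| = a - b := by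
        rw [ha, hb, ← Finset.sum_sub_distrib]
        apply Finset.sum_congr rfl
        intro x hx
        rw [abs_of_pos (by linarith [hmemS x hx])]
      have e2 : ∑ x ∈ Sᶜ, |p x - q x| = (1 - b) - (1 - a) := by
        rw [← hsc_q, ← hsc_p, ← Finset.sum_sub_distrib]
        apply Finset.sum_congr rfl
        intro x hx
        rw [abs_of_nonpos (by linarith [hmemSc x hx]), neg_sub]
      rw [e1, e2]; ring
    rw [hL1]
    apply Real.le_sqrt_of_sq_le
    nlinarith [hKL, hbin]

/-- If the empirical distribution of play `δ` after `T` iterations of a regret minimizer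
is a `C/√T`-approximate CCE and is `ε`-normal-form marginalizable, then the profile of
empirical average strategies (the marginals of `δ`) satisfies
`NashGap ≤ C/√T + 2M√(2ε)`, where `M` bounds the absolute utilities. -/
theorem nashGap_of_regret_minimizer
    {N : Type} [Fintype N] [DecidableEq N] [Nonempty N]
    {P : N → Type} [∀ i, Fintype (P i)] [∀ i, DecidableEq (P i)] [∀ i, Nonempty (P i)]
    (u : N → (∀ j, P j) → ℝ) (M : ℝ)
    (hM : ∀ (i : N) (ρ : ∀ j, P j), |u i ρ| ≤ M)
    (T : ℕ) (hT : 0 < T) (C : ℝ)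
    (δ : (∀ j, P j) → ℝ) (hpos : ∀ ρ, 0 ≤ δ ρ) (hsum : ∑ ρ, δ ρ = 1)
    (hcce : gap u δ ≤ C / Real.sqrt T)
    (ε : ℝ) (hε : KL δ (prodMarg δ) ≤ ε) :
    gap u (prodMarg δ) ≤ C / Real.sqrt T + 2 * M * Real.sqrt (2 * ε) := by
  classical
  set μ := prodMarg δ with hμ
  have hM0 : 0 ≤ M := le_trans (abs_nonneg _)
    (hM (Classical.arbitrary N) (Classical.arbitrary _))
  -- distribution facts for μ
  have hmarg_nonneg : ∀ (i : N) (a : P i), 0 ≤ marg δ i a := by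
    intro i a
    apply Finset.sum_nonneg
    intro ρ _
    split <;> [exact hpos ρ; exact le_rfl]
  have hμ_nonneg : ∀ ρ, 0 ≤ μ ρ := fun ρ =>
    Finset.prod_nonneg (fun i _ => hmarg_nonneg i (ρ i))
  have hms : ∀ i : N, ∑ a : P i, marg δ i a = 1 := by
    intro i
    simp only [marg]
    rw [Finset.sum_comm]
    have : ∀ ρ : ∀ j, P j, (∑ a : P i, if ρ i = a then δ ρ else 0) = δ ρ := by
      intro ρ; simp
    rw [Finset.sum_congr rfl (fun ρ _ => this ρ), hsum]
  have hμ_sum : ∑ ρ, μ ρ = 1 := by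
    have h1 : ∑ ρ : ∀ j, P j, μ ρ
        = ∑ ρ ∈ Fintype.piFinset (fun i : N => (univ : Finset (P i))), ∏ i, marg δ i (ρ i) := by
      rw [Fintype.piFinset_univ]; rfl
    rw [h1, ← Finset.prod_univ_sum]
    rw [Finset.prod_congr rfl (fun i _ => hms i)]
    simp
  have hac : ∀ ρ, μ ρ = 0 → δ ρ = 0 := by
    intro ρ h0
    by_contra hδ
    have hδpos : 0 < δ ρ := lt_of_le_of_ne (hpos ρ) (Ne.symm hδ)
    have hmge : ∀ i, 0 < marg δ i (ρ i) := by
      intro i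
      have hle : δ ρ ≤ marg δ i (ρ i) := by
        have := Finset.single_le_sum
          (f := fun ρ' : ∀ j, P j => if ρ' i = ρ i then δ ρ' else 0)
          (fun ρ' _ => by split <;> [exact hpos ρ'; exact le_rfl]) (Finset.mem_univ ρ)
        simpa [marg] using this
      linarith
    have : 0 < μ ρ := Finset.prod_pos (fun i _ => hmge i)
    linarith
  -- L1 bound
  have hL1 : ∑ ρ, |δ ρ - μ ρ| ≤ Real.sqrt (2 * ε) := by
    calc ∑ ρ, |δ ρ - μ ρ| ≤ Real.sqrt (2 * KL δ μ) :=
          pinsker δ μ hpos hμ_nonneg hsum hμ_sum hac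
      _ ≤ Real.sqrt (2 * ε) := Real.sqrt_le_sqrt (by linarith)
  -- main gap bound
  rw [gap]
  apply Finset.sup'_le
  rintro ⟨i, a⟩ -
  have h1 : devUtil u δ i a - expUtil (u i) δ ≤ gap u δ := by
    rw [gap]
    exact Finset.le_sup' (f := fun q : Σ i, P i => devUtil u δ q.1 q.2 - expUtil (u q.1) δ)
      (Finset.mem_univ (⟨i, a⟩ : Σ i, P i))
  have h2 : (devUtil u μ i a - expUtil (u i) μ) - (devUtil u δ i a - expUtil (u i) δ)
      = ∑ ρ, (μ ρ - δ ρ) * (u i (Function.update ρ i a) - u i ρ) := by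
    simp only [devUtil, expUtil, ← Finset.sum_sub_distrib]
    apply Finset.sum_congr rfl
    intro ρ _
    ring
  have h3 : ∑ ρ, (μ ρ - δ ρ) * (u i (Function.update ρ i a) - u i ρ)
      ≤ 2 * M * ∑ ρ, |δ ρ - μ ρ| := by
    rw [Finset.mul_sum]
    apply Finset.sum_le_sum
    intro ρ _
    have hg : |u i (Function.update ρ i a) - u i ρ| ≤ 2 * M := by
      calc |u i (Function.update ρ i a) - u i ρ|
          ≤ |u i (Function.update ρ i a)| + |u i ρ| := abs_sub _ _
        _ ≤ 2 * M := by linarith [hM i (Function.update ρ i a), hM i ρ]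
    calc (μ ρ - δ ρ) * (u i (Function.update ρ i a) - u i ρ)
        ≤ |(μ ρ - δ ρ) * (u i (Function.update ρ i a) - u i ρ)| := le_abs_self _
      _ = |μ ρ - δ ρ| * |u i (Function.update ρ i a) - u i ρ| := abs_mul _ _
      _ ≤ |μ ρ - δ ρ| * (2 * M) := mul_le_mul_of_nonneg_left hg (abs_nonneg _)
      _ = 2 * M * |δ ρ - μ ρ| := by rw [abs_sub_comm]; ring
  have h4 : 2 * M * ∑ ρ, |δ ρ - μ ρ| ≤ 2 * M * Real.sqrt (2 * ε) :=
    mul_le_mul_of_nonneg_left hL1 (by linarith)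
  linarith [hcce, h1, h2.le, h2.ge, h3, h4]
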